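/- Let G be a 4-regular finite simple pfaffian graph on an even number n of vertices. Then the number of perfect matchings of G is at most 4^{n/4} = 2^{n/2}. -/

import Mathlib

open scoped Classical
open Matrix

/-- `M` is a perfect matching of `G`: a set of edges of `G` such that every vertex
belongs to exactly one edge of `M`. -/
def IsPerfMatching {V : Type*} [Fintype V] (G : SimpleGraph V) (M : Finset (Sym2 V)) : Prop :=
  (∀ e ∈ M, e ∈ G.edgeSet) ∧ ∀ v : V, ∃! e, e ∈ M ∧ v ∈ e

/-- The number of perfect matchings of `G`. -/
noncomputable def perfmat {V : Type*} [Fintype V] (G : SimpleGraph V) : ℕ :=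
  Nat.card {M : Finset (Sym2 V) // IsPerfMatching G M}

/-- `G` is pfaffian: there is a real skew-symmetric matrix `S` indexed by the vertices,
with `S u v ∈ {1,-1}` whenever `{u,v}` is an edge and `S u v = 0` otherwise, such that
`det S = (perfmat G)²`. -/
def IsPfaffian {V : Type*} [Fintype V] (G : SimpleGraph V) : Prop :=
  ∃ S : Matrix V V ℝ, Sᵀ = -S ∧
    (∀ u v : V, G.Adj u v → S u v = 1 ∨ S u v = -1) ∧
    (∀ u v : V, ¬ G.Adj u v → S u v = 0) ∧
    S.det = (perfmat G : ℝ) ^ 2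

/-- `G` contains no 4-cycles. -/
def No4Cycles {V : Type*} (G : SimpleGraph V) : Prop :=
  ∀ a b c d : V, a ≠ b → a ≠ c → a ≠ d → b ≠ c → b ≠ d → c ≠ d →
    ¬ (G.Adj a b ∧ G.Adj b c ∧ G.Adj c d ∧ G.Adj d a)

/-- Trace of a Hermitian real matrix equals the sum of its eigenvalues. -/
lemma trace_eq_sum_eigs {V : Type*} [Fintype V] [DecidableEq V] {A : Matrix V V ℝ}
    (hA : A.IsHermitian) : A.trace = ∑ i, hA.eigenvalues i := by
  nth_rewrite 1 [hA.spectral_theorem]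
  rw [Unitary.conjStarAlgAut_apply, Matrix.trace_mul_cycle, Unitary.coe_star_mul_self, one_mul]
  simp [Matrix.trace_diagonal]

/-- AM-GM: product of nonneg reals summing to `4 * n` is at most `4 ^ n`. -/
lemma prod_le_of_sum {V : Type*} [Fintype V] (z : V → ℝ) (hz : ∀ i, 0 ≤ z i)
    (hsum : ∑ i, z i = 4 * Fintype.card V) (hn : Fintype.card V ≠ 0) :
    ∏ i, z i ≤ 4 ^ (Fintype.card V) := by
  set n := Fintype.card V
  have hn' : (0:ℝ) < n := by positivity
  have h := Real.geom_mean_le_arith_mean (Finset.univ : Finset V) (fun _ => 1) z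
    (fun _ _ => zero_le_one) (by simpa using hn') (fun i _ => hz i)
  simp only [Real.rpow_one, one_mul, Finset.sum_const, Finset.card_univ, nsmul_eq_mul,
    mul_one] at h
  rw [hsum] at h
  have h4 : (4 * (n:ℝ)) / n = 4 := by field_simp
  rw [h4] at h
  have hprod : (0:ℝ) ≤ ∏ i, z i := Finset.prod_nonneg (fun i _ => hz i)
  calc ∏ i, z i = ((∏ i, z i) ^ ((n:ℝ))⁻¹) ^ n := by
        rw [Real.rpow_inv_natCast_pow hprod hn]
    _ ≤ 4 ^ n := by
        exact pow_le_pow_left₀ (Real.rpow_nonneg hprod _) h _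

/-- A 4-regular pfaffian graph on an even number `n` of vertices has at
most `4^{n/4} = 2^{n/2}` perfect matchings. -/
theorem perfmat_quartic_pfaffian {V : Type*} [Fintype V] (G : SimpleGraph V)
    [DecidableRel G.Adj] (hV : Even (Fintype.card V))
    (hreg : G.IsRegularOfDegree 4) (hG : IsPfaffian G) :
    (perfmat G : ℝ) ≤ 4 ^ ((Fintype.card V : ℝ) / 4) ∧
      (4 : ℝ) ^ ((Fintype.card V : ℝ) / 4) = 2 ^ ((Fintype.card V : ℝ) / 2) := by
  set n := Fintype.card V with hn
  set p : ℝ := (perfmat G : ℝ) with hp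
  have hp0 : 0 ≤ p := Nat.cast_nonneg _
  obtain ⟨S, hskew, h1, h0, hdet⟩ := hG
  -- the key bound : p ^ 4 ≤ 4 ^ n
  have key : p ^ 4 ≤ (4:ℝ) ^ n := by
    rcases Nat.eq_zero_or_pos n with h0n | hpos
    · -- empty vertex type: det S = 1
      have : IsEmpty V := Fintype.card_eq_zero_iff.mp h0n
      rw [Matrix.det_isEmpty] at hdet
      have : p = 1 := by rw [hp]; nlinarith [hdet]
      simp [this, h0n]
    · set A := Sᴴ * S with hA
      have hAps : A.PosSemidef := Matrix.posSemidef_conjTranspose_mul_self S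
      have hAh : A.IsHermitian := hAps.isHermitian
      -- trace of A is 4 * n
      have hSsq : ∀ u v : V, S v u * S v u = if G.Adj v u then 1 else 0 := by
        intro u v
        by_cases h : G.Adj v u
        · rcases h1 v u h with he | he <;> simp [he, h]
        · simp [h0 v u h, h]
      have htr : A.trace = 4 * n := by
        rw [Matrix.trace]
        have : ∀ u : V, A.diag u = ∑ v, S v u * S v u := by
          intro u
          simp [hA, Matrix.diag, Matrix.mul_apply, Matrix.conjTranspose_apply, mul_comm]
        rw [Finset.sum_congr rfl (fun u _ => this u)]
        have : ∀ u : V, ∑ v, S v u * S v u = 4 := by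
          intro u
          rw [Finset.sum_congr rfl (fun v _ => hSsq u v), Finset.sum_boole]
          have hfil : (Finset.univ.filter fun v => G.Adj v u) = G.neighborFinset u := by
            ext v; simp [SimpleGraph.adj_comm]
          rw [hfil, show (G.neighborFinset u).card = G.degree u from rfl, hreg u]
          norm_num
        rw [Finset.sum_congr rfl (fun u _ => this u)]
        simp [mul_comm]
        rfl
      -- det A = p ^ 4
      have hdA : A.det = p ^ 4 := by
        rw [hA, Matrix.det_mul, Matrix.det_conjTranspose, hdet, star_trivial, hp]
        ring
      -- eigenvalue bound
      have hprod := prod_le_of_sum hAh.eigenvalues (fun i => hAps.eigenvalues_nonneg i)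
        (by rw [← trace_eq_sum_eigs hAh, htr]) hpos.ne'
      have hdet_eigs : A.det = ∏ i, hAh.eigenvalues i := by
        simpa using hAh.det_eq_prod_eigenvalues
      calc p ^ 4 = ∏ i, hAh.eigenvalues i := by rw [← hdA]; exact hdet_eigs
        _ ≤ (4:ℝ) ^ n := hprod
  constructor
  · have h4 : (0:ℝ) ≤ 4 ^ ((n:ℝ)/4) := (Real.rpow_nonneg (by norm_num) _)
    rw [← pow_le_pow_iff_left₀ hp0 h4 (by norm_num : 4 ≠ 0)]
    calc p ^ 4 ≤ (4:ℝ) ^ n := key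
      _ = ((4:ℝ) ^ ((n:ℝ)/4)) ^ 4 := by
          rw [← Real.rpow_natCast ((4:ℝ) ^ ((n:ℝ)/4)) 4, ← Real.rpow_mul (by norm_num),
            show ((n:ℝ)/4) * ((4:ℕ):ℝ) = (n:ℝ) by push_cast; ring, Real.rpow_natCast]
  · rw [show (4:ℝ) = (2:ℝ) ^ (2:ℝ) by
        rw [show (2:ℝ) = ((2:ℕ):ℝ) by norm_num, Real.rpow_natCast]; norm_num]
    rw [← Real.rpow_mul (by norm_num : (0:ℝ) ≤ 2)]
    ring_nf
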